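/- Let H be a complex Hilbert space and let S, T be bounded operators on H satisfying SS* = P₊, S*S = P₋ where P₊, P₋ are orthogonal projections with P₊ + P₋ = 1, and similarly TT* = Q₊, T*T = Q₋ with Q₊ + Q₋ = 1. If ST + TS = c·1 for some nonzero complex number c, then P₊H ∩ Q₊H = {0}, i.e. the infimum projection P₊ ∧ Q₊ equals 0. -/
import Mathlib


open scoped InnerProductSpace

/-- If `S S* = Pp`, `S* S = Pm` with `Pp + Pm = 1`, similarly for `T` and `Q±`,
and `S T + T S = c·1` with `c ≠ 0`, then the ranges of `Pp` and `Qp` intersect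
trivially, i.e. `Pp ∧ Qp = 0`. -/
theorem stmt1 {H : Type*} [NormedAddCommGroup H] [InnerProductSpace ℂ H] [CompleteSpace H]
    (S T Pp Pm Qp Qm : H →L[ℂ] H) (c : ℂ) (hc : c ≠ 0)
    (hPpsa : IsSelfAdjoint Pp) (hPpidem : Pp * Pp = Pp)
    (hPmsa : IsSelfAdjoint Pm) (hPmidem : Pm * Pm = Pm)
    (hQpsa : IsSelfAdjoint Qp) (hQpidem : Qp * Qp = Qp)
    (hQmsa : IsSelfAdjoint Qm) (hQmidem : Qm * Qm = Qm)
    (hPsum : Pp + Pm = 1) (hQsum : Qp + Qm = 1)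
    (hS1 : S * star S = Pp) (hS2 : star S * S = Pm)
    (hT1 : T * star T = Qp) (hT2 : star T * T = Qm)
    (hST : S * T + T * S = c • (1 : H →L[ℂ] H)) :
    ∀ x : H, Pp x = x → Qp x = x → x = 0 := by
  intro x hPx hQx
  have hPm : Pm x = 0 := by
    have := congrArg (fun f : H →L[ℂ] H => f x) hPsum
    simpa [hPx] using this
  have hQm : Qm x = 0 := by
    have := congrArg (fun f : H →L[ℂ] H => f x) hQsum
    simpa [hQx] using this
  have hSx : S x = 0 := by
    have h1 : ⟪S x, S x⟫_ℂ = 0 := by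
      rw [← ContinuousLinearMap.adjoint_inner_right]
      have : (star S * S) x = 0 := by rw [hS2]; exact hPm
      rw [ContinuousLinearMap.star_eq_adjoint] at this
      have h2 : ContinuousLinearMap.adjoint S (S x) = 0 := this
      rw [h2, inner_zero_right]
    exact inner_self_eq_zero.mp h1
  have hTx : T x = 0 := by
    have h1 : ⟪T x, T x⟫_ℂ = 0 := by
      rw [← ContinuousLinearMap.adjoint_inner_right]
      have : (star T * T) x = 0 := by rw [hT2]; exact hQm
      rw [ContinuousLinearMap.star_eq_adjoint] at this
      have h2 : ContinuousLinearMap.adjoint T (T x) = 0 := this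
      rw [h2, inner_zero_right]
    exact inner_self_eq_zero.mp h1
  have := congrArg (fun f : H →L[ℂ] H => f x) hST
  simp only [ContinuousLinearMap.add_apply, ContinuousLinearMap.mul_apply,
    ContinuousLinearMap.smul_apply, ContinuousLinearMap.one_apply, hSx, hTx,
    map_zero, add_zero] at this
  have : c • x = 0 := this.symm
  simpa [hc] using smul_eq_zero.mp this
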